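/- Let D ⊆ ℝ² be open and let q, r, q̄, r̄, φ : D → ℂ be C¹ functions satisfying the mPLR system, and let ζ ∈ ℂ with ζ ≠ 0. Define the 2×2 complex matrix-valued functions B₁ = [[2qr + ζ, −2q], [2rζ, −2qr − ζ]] and B̄₁ = [[ζ⁻¹, −2q̄·exp(2φ)·ζ⁻¹], [2r̄·exp(−2φ), −ζ⁻¹]] on D. Then the zero-curvature equation ∂B₁/∂t̄ − ∂B̄₁/∂t = B̄₁·B₁ − B₁·B̄₁ holds at every point of D (an identity of 2×2 matrices, derivatives taken entrywise). -/

import Mathlib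

section helpers
variable {f g : ℝ × ℝ → ℂ} {p v : ℝ × ℝ} {c : ℂ}

lemma fdv_mul (hf : DifferentiableAt ℝ f p) (hg : DifferentiableAt ℝ g p) :
    fderiv ℝ (fun x => f x * g x) p v
      = fderiv ℝ f p v * g p + f p * fderiv ℝ g p v := by
  rw [fderiv_fun_mul hf hg]
  simp only [ContinuousLinearMap.add_apply, ContinuousLinearMap.smul_apply, smul_eq_mul]
  ring

lemma fdv_const_mul (hf : DifferentiableAt ℝ f p) (c : ℂ) :
    fderiv ℝ (fun x => c * f x) p v = c * fderiv ℝ f p v := by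
  rw [fderiv_const_mul hf]
  simp

lemma fdv_mul_const (hf : DifferentiableAt ℝ f p) (c : ℂ) :
    fderiv ℝ (fun x => f x * c) p v = fderiv ℝ f p v * c := by
  rw [fderiv_mul_const hf]
  simp [mul_comm]

lemma fdv_cexp (hf : DifferentiableAt ℝ f p) :
    fderiv ℝ (fun x => Complex.exp (f x)) p v
      = Complex.exp (f p) * fderiv ℝ f p v := by
  rw [(hf.hasFDerivAt.cexp).fderiv]
  simp

end helpers


/-- Partial derivative with respect to the first coordinate `t`. -/
noncomputable def pd1 (f : ℝ × ℝ → ℂ) : ℝ × ℝ → ℂ :=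
  fun p => fderiv ℝ f p ((1 : ℝ), (0 : ℝ))

/-- Partial derivative with respect to the second coordinate `t̄`. -/
noncomputable def pd2 (f : ℝ × ℝ → ℂ) : ℝ × ℝ → ℂ :=
  fun p => fderiv ℝ f p ((0 : ℝ), (1 : ℝ))

/-- The modified Pohlmeyer–Lund–Regge system on a set `D ⊆ ℝ²`. -/
def mPLR (D : Set (ℝ × ℝ)) (q r qb rb φ : ℝ × ℝ → ℂ) : Prop :=
  ∀ p ∈ D,
    pd2 q p = -2 * qb p * Complex.exp (2 * φ p) ∧
    pd2 r p = 2 * rb p * Complex.exp (-2 * φ p) ∧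
    pd1 φ p = 2 * q p * r p ∧
    pd2 φ p = -2 * qb p * rb p ∧
    pd1 qb p = -2 * q p * Complex.exp (-2 * φ p) ∧
    pd1 rb p = 2 * r p * Complex.exp (2 * φ p)

/-- Entrywise `t`-derivative of a matrix-valued function. -/
noncomputable def matPd1 (F : ℝ × ℝ → Matrix (Fin 2) (Fin 2) ℂ) (p : ℝ × ℝ) :
    Matrix (Fin 2) (Fin 2) ℂ :=
  Matrix.of fun i j => pd1 (fun x => F x i j) p

/-- Entrywise `t̄`-derivative of a matrix-valued function. -/
noncomputable def matPd2 (F : ℝ × ℝ → Matrix (Fin 2) (Fin 2) ℂ) (p : ℝ × ℝ) :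
    Matrix (Fin 2) (Fin 2) ℂ :=
  Matrix.of fun i j => pd2 (fun x => F x i j) p

theorem mPLR_zero_curvature
    (D : Set (ℝ × ℝ)) (hD : IsOpen D) (q r qb rb φ : ℝ × ℝ → ℂ)
    (hq : ContDiffOn ℝ 1 q D) (hr : ContDiffOn ℝ 1 r D)
    (hqb : ContDiffOn ℝ 1 qb D) (hrb : ContDiffOn ℝ 1 rb D)
    (hφ : ContDiffOn ℝ 1 φ D)
    (h : mPLR D q r qb rb φ)
    (ζ : ℂ) (hζ : ζ ≠ 0)
    (B1 : ℝ × ℝ → Matrix (Fin 2) (Fin 2) ℂ)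
    (hB1 : B1 = fun p =>
      !![2 * q p * r p + ζ, -2 * q p;
         2 * r p * ζ, -(2 * q p * r p) - ζ])
    (B1b : ℝ × ℝ → Matrix (Fin 2) (Fin 2) ℂ)
    (hB1b : B1b = fun p =>
      !![ζ⁻¹, -2 * qb p * Complex.exp (2 * φ p) * ζ⁻¹;
         2 * rb p * Complex.exp (-2 * φ p), -ζ⁻¹]) :
    ∀ p ∈ D, matPd2 B1 p - matPd1 B1b p = B1b p * B1 p - B1 p * B1b p := by
  intro p hp
  obtain ⟨h1, h2, h3, h4, h5, h6⟩ := h p hp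
  have hmem := hD.mem_nhds hp
  have hq' : DifferentiableAt ℝ q p := (hq.contDiffAt hmem).differentiableAt one_ne_zero
  have hr' : DifferentiableAt ℝ r p := (hr.contDiffAt hmem).differentiableAt one_ne_zero
  have hqb' : DifferentiableAt ℝ qb p := (hqb.contDiffAt hmem).differentiableAt one_ne_zero
  have hrb' : DifferentiableAt ℝ rb p := (hrb.contDiffAt hmem).differentiableAt one_ne_zero
  have hφ' : DifferentiableAt ℝ φ p := (hφ.contDiffAt hmem).differentiableAt one_ne_zero
  have hE : Complex.exp (2 * φ p) * Complex.exp (-2 * φ p) = 1 := by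
    rw [← Complex.exp_add]
    ring_nf
    exact Complex.exp_zero
  have hE' : Complex.exp (2 * φ p) * Complex.exp (-(2 * φ p)) = 1 := by
    rw [← Complex.exp_add]
    ring_nf
    exact Complex.exp_zero
  have E1 : pd2 (fun x => 2 * q x * r x + ζ) p
      = 2 * pd2 q p * r p + 2 * q p * pd2 r p := by
    simp only [pd2, fderiv_add_const, fdv_mul (hq'.const_mul 2) hr', fdv_const_mul hq']
  have E2 : pd2 (fun x => -2 * q x) p = -2 * pd2 q p := by
    simp only [pd2, fdv_const_mul hq']
  have E3 : pd2 (fun x => 2 * r x * ζ) p = 2 * pd2 r p * ζ := by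
    simp only [pd2, fdv_mul_const (hr'.const_mul 2) ζ, fdv_const_mul hr']
  have E4 : pd2 (fun x => -(2 * q x * r x) - ζ) p
      = -(2 * pd2 q p * r p + 2 * q p * pd2 r p) := by
    simp only [pd2, fderiv_sub_const, fderiv_fun_neg, ContinuousLinearMap.neg_apply,
      fdv_mul (hq'.const_mul 2) hr', fdv_const_mul hq']
  have hexp1 : DifferentiableAt ℝ (fun x => Complex.exp (2 * φ x)) p :=
    (hφ'.const_mul 2).cexp
  have hexp2 : DifferentiableAt ℝ (fun x => Complex.exp (-2 * φ x)) p :=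
    (hφ'.const_mul (-2)).cexp
  have F1 : pd1 (fun _ : ℝ × ℝ => ζ⁻¹) p = 0 := by
    simp [pd1]
  have F2 : pd1 (fun x => -2 * qb x * Complex.exp (2 * φ x) * ζ⁻¹) p
      = (-2 * pd1 qb p * Complex.exp (2 * φ p)
          + -2 * qb p * (Complex.exp (2 * φ p) * (2 * pd1 φ p))) * ζ⁻¹ := by
    simp only [pd1, fdv_mul_const (f := fun x => -2 * qb x * Complex.exp (2 * φ x)) ((hqb'.const_mul (-2)).mul hexp1) ζ⁻¹,
      fdv_mul (hqb'.const_mul (-2)) hexp1, fdv_const_mul hqb',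
      fdv_cexp (hφ'.const_mul 2), fdv_const_mul hφ']
  have F3 : pd1 (fun x => 2 * rb x * Complex.exp (-2 * φ x)) p
      = 2 * pd1 rb p * Complex.exp (-2 * φ p)
          + 2 * rb p * (Complex.exp (-2 * φ p) * (-2 * pd1 φ p)) := by
    simp only [pd1, fdv_mul (hrb'.const_mul 2) hexp2, fdv_const_mul hrb',
      fdv_cexp (hφ'.const_mul (-2)), fdv_const_mul hφ']
  have F4 : pd1 (fun _ : ℝ × ℝ => -ζ⁻¹) p = 0 := by
    simp [pd1]
  ext i j
  fin_cases i <;> fin_cases j <;>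
    simp only [matPd1, matPd2, hB1, hB1b, Matrix.of_apply, Matrix.sub_apply,
      Matrix.mul_apply, Fin.sum_univ_two, Matrix.cons_val', Matrix.cons_val_zero,
      Matrix.cons_val_one, Matrix.head_cons, Matrix.head_fin_const,
      Matrix.empty_val', Matrix.cons_val_fin_one, Fin.isValue, Fin.zero_eta, Fin.mk_one]
  · rw [E1, F1, h1, h2]
    field_simp
    ring
  · rw [E2, F2, h1, h3, h5]
    field_simp
    linear_combination (-2 * q p) * hE'
  · rw [E3, F3, h2, h3, h6]
    field_simp
    linear_combination (-2 * r p) * hE'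
  · rw [E4, F4, h1, h2]
    field_simp
    ring
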